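/- Let each entry of R ∈ R^{d×k} be sampled i.i.d. from the distribution on {−1, 0, 1} with P(0) = p_0 and P(−1) = P(1) = (1 − p_0)/2 for p_0 ∈ (0,1). Then for B-neighbors X, X' ∈ L2^{n×d}, P(||k^{-1}XR − k^{-1}X'R||_F ≥ α) ≤ β whenever α ≥ (B/√k) √(d ln((1−p_0)(e−1) + 1) − k^{-1} ln β). -/

import Mathlib

set_option maxHeartbeats 1000000


open MeasureTheory Real

noncomputable section

/-- Datasets: real n×d matrices as functions. -/
abbrev Mat (n d : ℕ) := Fin n → Fin d → ℝ

/-- Euclidean (L2) distance between two rows. -/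
def rowDist {d : ℕ} (u v : Fin d → ℝ) : ℝ := Real.sqrt (∑ j, (u j - v j) ^ 2)

/-- The set of n×d matrices each of whose rows has L2 norm at most 1. -/
def L2Ball (n d : ℕ) : Set (Mat n d) :=
  {X | ∀ i, Real.sqrt (∑ j, (X i j) ^ 2) ≤ 1}

/-- Classic neighbors: agree on exactly n−1 rows. -/
def ClassicNeighbors {n d : ℕ} (X X' : Mat n d) : Prop :=
  ∃ i, X i ≠ X' i ∧ ∀ j, j ≠ i → X j = X' j

/-- B-neighbors: classic neighbors whose differing rows are within L2 distance B. -/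
def BNeighbors {n d : ℕ} (B : ℝ) (X X' : Mat n d) : Prop :=
  ∃ i, X i ≠ X' i ∧ (∀ j, j ≠ i → X j = X' j) ∧ rowDist (X i) (X' i) ≤ B

/-- (B, ε, δ)-targeted differential privacy. -/
def TDP {n d : ℕ} {Ω : Type*} [MeasurableSpace Ω]
    (A : Mat n d → Measure Ω) (B ε δ : ℝ) : Prop :=
  ∀ X ∈ L2Ball n d, ∀ X' ∈ L2Ball n d, BNeighbors B X X' →
    ∀ E : Set Ω, MeasurableSet E →
      A X E ≤ ENNReal.ofReal (Real.exp ε) * A X' E + ENNReal.ofReal δ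

/-- (ε, δ)-classic differential privacy. -/
def ClassicDP {n d : ℕ} {Ω : Type*} [MeasurableSpace Ω]
    (A : Mat n d → Measure Ω) (ε δ : ℝ) : Prop :=
  ∀ X ∈ L2Ball n d, ∀ X' ∈ L2Ball n d, ClassicNeighbors X X' →
    ∀ E : Set Ω, MeasurableSet E →
      A X E ≤ ENNReal.ofReal (Real.exp ε) * A X' E + ENNReal.ofReal δ

/-- Cumulative row-wise L2 distance between two datasets. -/
def cumDist {n d : ℕ} (X X' : Mat n d) : ℝ := ∑ i, rowDist (X i) (X' i)

/-- Squared Frobenius norm. -/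
def frobSq {a b : ℕ} (M : Fin a → Fin b → ℝ) : ℝ := ∑ i, ∑ j, (M i j) ^ 2

theorem lintegral_fin_pi_prod {m : ℕ} {E : Fin m → Type*} [∀ i, MeasurableSpace (E i)]
    (μ : ∀ i, Measure (E i)) [∀ i, SigmaFinite (μ i)]
    (f : ∀ i, E i → ENNReal) (hf : ∀ i, Measurable (f i)) :
    ∫⁻ x, ∏ i, f i (x i) ∂Measure.pi μ = ∏ i, ∫⁻ x, f i x ∂μ i := by
  induction m with
  | zero => simp [lintegral_const, Measure.pi_empty_univ]
  | succ m ih =>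
    have h := ((measurePreserving_piFinSuccAbove μ 0).symm)
    rw [← h.lintegral_comp_emb (MeasurableEquiv.measurableEmbedding _)]
    simp only [MeasurableEquiv.piFinSuccAbove_symm_apply, Fin.insertNthEquiv_apply,
      Fin.prod_univ_succ, Fin.insertNth_apply_same, ← Fin.zero_succAbove,
      Fin.insertNth_apply_succAbove]
    have hg : Measurable (fun b : (j : Fin m) → E (Fin.succAbove 0 j) =>
        ∏ x : Fin m, f (Fin.succAbove 0 x) (b x)) := by
      apply Finset.measurable_prod
      intro i _
      exact (hf _).comp (measurable_pi_apply i)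
    rw [lintegral_prod_mul (f := fun x => f 0 x)
      (g := fun b : (j : Fin m) → E (Fin.succAbove 0 j) =>
        ∏ x : Fin m, f (Fin.succAbove 0 x) (b x)) (hf 0).aemeasurable hg.aemeasurable]
    rw [ih _ _ (fun i => hf _)]
    rfl

/-- probabilistic sensitivity bound for the random sign projection:
with R sampled entrywise i.i.d. from the categorical distribution on {−1,0,1}
(P(0)=p₀, P(±1)=(1−p₀)/2), the scaled projection of B-neighbors has Frobenius
distance at least α with probability at most β, whenever
α ≥ (B/√k)√(d ln((1−p₀)(e−1)+1) − k⁻¹ ln β). -/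
theorem probabilistic_projection_sensitivity {n d k : ℕ} (hk : 0 < k)
    (p₀ B α β : ℝ) (hp₀ : p₀ ∈ Set.Ioo (0 : ℝ) 1) (hβ : 0 < β)
    (ν : Measure ℝ) [IsProbabilityMeasure ν]
    (hν : ν = ENNReal.ofReal p₀ • Measure.dirac 0 +
      ENNReal.ofReal ((1 - p₀) / 2) • Measure.dirac (-1) +
      ENNReal.ofReal ((1 - p₀) / 2) • Measure.dirac 1)
    (X X' : Mat n d) (hX : X ∈ L2Ball n d) (hX' : X' ∈ L2Ball n d)
    (hN : BNeighbors B X X')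
    (hα : α ≥ B / Real.sqrt k *
      Real.sqrt ((d : ℝ) * Real.log ((1 - p₀) * (Real.exp 1 - 1) + 1) -
        (k : ℝ)⁻¹ * Real.log β)) :
    (Measure.pi fun _ : Fin d => Measure.pi fun _ : Fin k => ν)
      {R : Fin d → Fin k → ℝ |
        α ≤ Real.sqrt (frobSq (fun i j => (k : ℝ)⁻¹ * (∑ p, X i p * R p j) -
          (k : ℝ)⁻¹ * (∑ p, X' i p * R p j)))} ≤ ENNReal.ofReal β := by
  obtain ⟨hp0, hp1⟩ := hp₀
  set μpi := (Measure.pi fun _ : Fin d => Measure.pi fun _ : Fin k => ν) with hμ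
  rcases le_or_gt 1 β with hβ1 | hβ1
  · calc μpi _ ≤ μpi Set.univ := measure_mono (Set.subset_univ _)
      _ = 1 := measure_univ
      _ ≤ ENNReal.ofReal β := by
          rw [← ENNReal.ofReal_one]; exact ENNReal.ofReal_le_ofReal hβ1
  obtain ⟨i₀, hne, hrow, hB⟩ := hN
  have hkpos : (0 : ℝ) < k := by exact_mod_cast hk
  set c : ℝ := (1 - p₀) * (Real.exp 1 - 1) + 1 with hc
  have he1 : (1 : ℝ) < Real.exp 1 := Real.one_lt_exp_iff.mpr one_pos
  have hc1 : 1 ≤ c := by nlinarith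
  have hcpos : (0 : ℝ) < c := lt_of_lt_of_le one_pos hc1
  have hup : 0 < ∑ p, (X i₀ p - X' i₀ p) ^ 2 := by
    obtain ⟨q, hq⟩ := Function.ne_iff.mp hne
    have h1 : 0 < (X i₀ q - X' i₀ q) ^ 2 := pow_two_pos_of_ne_zero (sub_ne_zero.mpr hq)
    exact lt_of_lt_of_le h1
      (Finset.single_le_sum (f := fun p => (X i₀ p - X' i₀ p) ^ 2)
        (fun p _ => sq_nonneg _) (Finset.mem_univ q))
  have hBpos : 0 < B := lt_of_lt_of_le (Real.sqrt_pos.mpr hup) hB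
  have huB : ∑ p, (X i₀ p - X' i₀ p) ^ 2 ≤ B ^ 2 := by
    have h1 : Real.sqrt (∑ p, (X i₀ p - X' i₀ p) ^ 2) ^ 2 ≤ B ^ 2 :=
      pow_le_pow_left₀ (Real.sqrt_nonneg _) hB 2
    rwa [Real.sq_sqrt hup.le] at h1
  have hα0 : 0 ≤ α := le_trans (by positivity) hα
  set s : ℝ := (d : ℝ) * Real.log c - (k : ℝ)⁻¹ * Real.log β with hs
  have hlogβ : Real.log β < 0 := Real.log_neg hβ hβ1
  have hlogc : 0 ≤ Real.log c := Real.log_nonneg hc1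
  have hs0 : 0 ≤ s := by
    have h1 : 0 ≤ (d : ℝ) * Real.log c := by positivity
    have h2 : (k : ℝ)⁻¹ * Real.log β ≤ 0 :=
      mul_nonpos_of_nonneg_of_nonpos (by positivity) hlogβ.le
    simp only [hs]; linarith
  set t : ℝ := (k : ℝ) ^ 2 * α ^ 2 / B ^ 2 with ht
  have h1 : B ^ 2 / (k : ℝ) * s ≤ α ^ 2 := by
    have h := pow_le_pow_left₀ (by positivity) hα 2
    rwa [mul_pow, div_pow, Real.sq_sqrt hkpos.le, Real.sq_sqrt hs0] at h
  have h1' : B ^ 2 * s ≤ α ^ 2 * k := by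
    rw [div_mul_eq_mul_div, div_le_iff₀ hkpos] at h1
    linarith
  have hkey : (d : ℝ) * k * Real.log c ≤ Real.log β + t := by
    have h2 : (k : ℝ) * s ≤ t := by
      rw [ht, le_div_iff₀ (by positivity : (0 : ℝ) < B ^ 2)]
      nlinarith [mul_le_mul_of_nonneg_left h1' hkpos.le]
    have hks : (k : ℝ) * s = (d : ℝ) * k * Real.log c - Real.log β := by
      rw [hs, mul_sub, ← mul_assoc (k : ℝ) (k : ℝ)⁻¹, mul_inv_cancel₀ hkpos.ne', one_mul]; ring
    linarith
  -- event inclusion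
  set g : ℝ → ENNReal := fun x => ENNReal.ofReal (Real.exp (x ^ 2)) with hgdef
  have hgm : Measurable g := (Real.measurable_exp.comp (measurable_id.pow_const 2)).ennreal_ofReal
  set F : (Fin d → Fin k → ℝ) → ENNReal := fun R => ∏ p, ∏ j, g (R p j) with hFdef
  have hFm : Measurable F := Finset.measurable_prod _ fun p _ =>
    Finset.measurable_prod _ fun j _ =>
      hgm.comp ((measurable_pi_apply j).comp (measurable_pi_apply p))
  have hsub : {R : Fin d → Fin k → ℝ |
        α ≤ Real.sqrt (frobSq (fun i j => (k : ℝ)⁻¹ * (∑ p, X i p * R p j) -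
          (k : ℝ)⁻¹ * (∑ p, X' i p * R p j)))} ⊆
      {R : Fin d → Fin k → ℝ | ENNReal.ofReal (Real.exp t) ≤ F R} := by
    intro R hR
    simp only [Set.mem_setOf_eq] at hR ⊢
    set Y : ℝ := ∑ p, ∑ j, (R p j) ^ 2 with hY
    have hM0 : ∀ i, i ≠ i₀ → ∀ j : Fin k,
        ((k : ℝ)⁻¹ * (∑ p, X i p * R p j) - (k : ℝ)⁻¹ * (∑ p, X' i p * R p j)) = 0 := by
      intro i hi j; rw [hrow i hi]; ring
    have hfrob : frobSq (fun i j => (k : ℝ)⁻¹ * (∑ p, X i p * R p j) -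
          (k : ℝ)⁻¹ * (∑ p, X' i p * R p j)) ≤ ((k : ℝ)⁻¹) ^ 2 * B ^ 2 * Y := by
      rw [frobSq]
      rw [Finset.sum_eq_single i₀ (fun i _ hi => by simp [hM0 i hi])
        (fun h => absurd (Finset.mem_univ i₀) h)]
      have hterm : ∀ j : Fin k,
          ((k : ℝ)⁻¹ * (∑ p, X i₀ p * R p j) - (k : ℝ)⁻¹ * (∑ p, X' i₀ p * R p j)) ^ 2 ≤
          ((k : ℝ)⁻¹) ^ 2 * B ^ 2 * ∑ p, (R p j) ^ 2 := by
        intro j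
        have hrw : (k : ℝ)⁻¹ * (∑ p, X i₀ p * R p j) - (k : ℝ)⁻¹ * (∑ p, X' i₀ p * R p j) =
            (k : ℝ)⁻¹ * ∑ p, (X i₀ p - X' i₀ p) * R p j := by
          have h3 : ∑ p, (X i₀ p - X' i₀ p) * R p j =
              (∑ p, X i₀ p * R p j) - ∑ p, X' i₀ p * R p j := by
            rw [← Finset.sum_sub_distrib]
            exact Finset.sum_congr rfl fun p _ => by ring
          rw [h3]; ring
        rw [hrw, mul_pow]
        have hcs := Finset.sum_mul_sq_le_sq_mul_sq Finset.univ
          (fun p => X i₀ p - X' i₀ p) (fun p => R p j)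
        have h2 : (∑ p, (X i₀ p - X' i₀ p) * R p j) ^ 2 ≤ B ^ 2 * ∑ p, (R p j) ^ 2 :=
          le_trans hcs (mul_le_mul_of_nonneg_right huB
            (Finset.sum_nonneg fun p _ => sq_nonneg _))
        calc ((k : ℝ)⁻¹) ^ 2 * (∑ p, (X i₀ p - X' i₀ p) * R p j) ^ 2
            ≤ ((k : ℝ)⁻¹) ^ 2 * (B ^ 2 * ∑ p, (R p j) ^ 2) :=
              mul_le_mul_of_nonneg_left h2 (by positivity)
          _ = ((k : ℝ)⁻¹) ^ 2 * B ^ 2 * ∑ p, (R p j) ^ 2 := by ring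
      calc ∑ j, ((k : ℝ)⁻¹ * (∑ p, X i₀ p * R p j) -
              (k : ℝ)⁻¹ * (∑ p, X' i₀ p * R p j)) ^ 2
          ≤ ∑ j, ((k : ℝ)⁻¹) ^ 2 * B ^ 2 * ∑ p, (R p j) ^ 2 :=
            Finset.sum_le_sum fun j _ => hterm j
        _ = ((k : ℝ)⁻¹) ^ 2 * B ^ 2 * Y := by
            rw [← Finset.mul_sum, hY, Finset.sum_comm]
    have hfrob0 : 0 ≤ frobSq (fun i j => (k : ℝ)⁻¹ * (∑ p, X i p * R p j) -
          (k : ℝ)⁻¹ * (∑ p, X' i p * R p j)) :=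
      Finset.sum_nonneg fun i _ => Finset.sum_nonneg fun j _ => sq_nonneg _
    have hα2 : α ^ 2 ≤ frobSq (fun i j => (k : ℝ)⁻¹ * (∑ p, X i p * R p j) -
          (k : ℝ)⁻¹ * (∑ p, X' i p * R p j)) := by
      have h := pow_le_pow_left₀ hα0 hR 2
      rwa [Real.sq_sqrt hfrob0] at h
    have htY : t ≤ Y := by
      rw [ht, div_le_iff₀ (by positivity : (0 : ℝ) < B ^ 2)]
      have h3 : α ^ 2 ≤ ((k : ℝ)⁻¹) ^ 2 * B ^ 2 * Y := le_trans hα2 hfrob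
      have hk1 : (k : ℝ)⁻¹ * k = 1 := inv_mul_cancel₀ hkpos.ne'
      have h4 : (k : ℝ) ^ 2 * (((k : ℝ)⁻¹) ^ 2 * B ^ 2 * Y) = Y * B ^ 2 := by
        field_simp
      linarith [h4, mul_le_mul_of_nonneg_left h3 (sq_nonneg (k : ℝ))]
    have hFR : F R = ENNReal.ofReal (Real.exp Y) := by
      rw [hFdef, hY, Real.exp_sum, ENNReal.ofReal_prod_of_nonneg
        (fun p _ => (Real.exp_pos _).le)]
      exact Finset.prod_congr rfl fun p _ => by
        rw [Real.exp_sum, ENNReal.ofReal_prod_of_nonneg (fun j _ => (Real.exp_pos _).le)]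
    rw [hFR]
    exact ENNReal.ofReal_le_ofReal (Real.exp_le_exp.mpr htY)
  -- integral of g
  have hgint : ∫⁻ x, g x ∂ν = ENNReal.ofReal c := by
    rw [hν, lintegral_add_measure, lintegral_add_measure, lintegral_smul_measure,
      lintegral_smul_measure, lintegral_smul_measure, lintegral_dirac' _ hgm,
      lintegral_dirac' _ hgm, lintegral_dirac' _ hgm]
    simp only [hgdef]
    norm_num
    show ENNReal.ofReal p₀ + ENNReal.ofReal ((1 - p₀) / 2) * ENNReal.ofReal (Real.exp 1) +
      ENNReal.ofReal ((1 - p₀) / 2) * ENNReal.ofReal (Real.exp 1) = ENNReal.ofReal c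
    rw [← ENNReal.ofReal_mul (by linarith : (0:ℝ) ≤ (1 - p₀) / 2)]
    have hx : (0:ℝ) ≤ (1 - p₀) / 2 * Real.exp 1 :=
      mul_nonneg (by linarith) (Real.exp_pos 1).le
    rw [← ENNReal.ofReal_add hp0.le hx, ← ENNReal.ofReal_add (add_nonneg hp0.le hx) hx]
    congr 1
    rw [hc]
    ring
  -- total integral
  have hlint : ∫⁻ R, F R ∂μpi = ENNReal.ofReal c ^ (k * d) := by
    rw [hμ, hFdef]
    rw [lintegral_fin_pi_prod (fun _ : Fin d => Measure.pi fun _ : Fin k => ν)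
      (fun _ r => ∏ j, g (r j))
      (fun _ => Finset.measurable_prod _ fun j _ => hgm.comp (measurable_pi_apply j))]
    have h2 : ∫⁻ r : Fin k → ℝ, ∏ j, g (r j) ∂(Measure.pi fun _ : Fin k => ν) =
        ENNReal.ofReal c ^ k := by
      rw [lintegral_fin_pi_prod (fun _ : Fin k => ν) (fun _ x => g x) (fun _ => hgm)]
      simp [hgint, Finset.prod_const]
    simp [h2, Finset.prod_const, pow_mul]
  -- Markov
  have hmark := mul_meas_ge_le_lintegral₀ (μ := μpi) hFm.aemeasurable
    (ENNReal.ofReal (Real.exp t))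
  have ha0 : ENNReal.ofReal (Real.exp t) ≠ 0 := (ENNReal.ofReal_pos.mpr (Real.exp_pos t)).ne'
  have hT : μpi {R : Fin d → Fin k → ℝ | ENNReal.ofReal (Real.exp t) ≤ F R} ≤
      ENNReal.ofReal c ^ (k * d) / ENNReal.ofReal (Real.exp t) := by
    rw [ENNReal.le_div_iff_mul_le (Or.inl ha0) (Or.inl ENNReal.ofReal_ne_top)]
    rw [mul_comm]
    exact hmark.trans_eq hlint
  refine le_trans (measure_mono hsub) (le_trans hT ?_)
  rw [← ENNReal.ofReal_pow hcpos.le, ← ENNReal.ofReal_div_of_pos (Real.exp_pos t)]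
  apply ENNReal.ofReal_le_ofReal
  rw [div_le_iff₀ (Real.exp_pos t)]
  have hcp : c ^ (k * d) = Real.exp ((k * d : ℕ) * Real.log c) := by
    rw [← Real.log_pow, Real.exp_log (by positivity)]
  have hβe : β * Real.exp t = Real.exp (Real.log β + t) := by
    rw [Real.exp_add, Real.exp_log hβ]
  rw [hcp, hβe]
  apply Real.exp_le_exp.mpr
  push_cast
  linarith
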